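/- Let n be odd and f : 𝔽₂ⁿ → ℤ₈, f(x) = a₁(x) + 2a₂(x) + 4a₃(x), be gbent. Suppose that for each u ∈ 𝔽₂ⁿ either W_{a₃}(u) = W_{a₁⊕a₃}(u) = 0 and |W_{a₂⊕a₃}(u)| = |W_{a₁⊕a₂⊕a₃}(u)| = 2^{(n+1)/2}, or |W_{a₃}(u)| = |W_{a₁⊕a₃}(u)| = 2^{(n+1)/2} and W_{a₂⊕a₃}(u) = W_{a₁⊕a₂⊕a₃}(u) = 0. Then the Gray image ψ(f)(x, y₁, y₂) = y₁a₁(x) ⊕ y₂a₂(x) ⊕ a₃(x) is a semibent Boolean function on 𝔽₂^{n+2}, i.e., its Walsh–Hadamard transform takes only values in {0, ±2^{(n+3)/2}}. -/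

import Mathlib

open Finset Complex

/-- Standard inner product on `𝔽₂ⁿ`. -/
def ip {n : ℕ} (u x : Fin n → ZMod 2) : ZMod 2 := ∑ i, u i * x i

/-- Walsh–Hadamard transform of a Boolean function. -/
noncomputable def WHT {n : ℕ} (g : (Fin n → ZMod 2) → ZMod 2) (u : Fin n → ZMod 2) : ℂ :=
  ∑ x : Fin n → ZMod 2, (-1 : ℂ) ^ ((g x + ip u x).val)

/-- Generalized Walsh–Hadamard transform of `f : 𝔽₂ⁿ → ℤ_q`. -/
noncomputable def GWT {n : ℕ} (q : ℕ) [NeZero q] (f : (Fin n → ZMod 2) → ZMod q)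
    (u : Fin n → ZMod 2) : ℂ :=
  ∑ x : Fin n → ZMod 2,
    Complex.exp (2 * Real.pi * Complex.I * ((f x).val : ℂ) / (q : ℂ)) *
      (-1 : ℂ) ^ ((ip u x).val)


/-- Walsh–Hadamard transform on `𝔽₂ⁿ × 𝔽₂ × 𝔽₂`. -/
noncomputable def WHT3 {n : ℕ} (F : (Fin n → ZMod 2) × ZMod 2 × ZMod 2 → ZMod 2)
    (u : Fin n → ZMod 2) (v1 v2 : ZMod 2) : ℂ :=
  ∑ z : (Fin n → ZMod 2) × ZMod 2 × ZMod 2,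
    (-1 : ℂ) ^ ((F z + ip u z.1 + v1 * z.2.1 + v2 * z.2.2).val)


noncomputable def chi (a : ZMod 2) : ℂ := (-1 : ℂ) ^ a.val

lemma zmod2_cases (a : ZMod 2) : a = 0 ∨ a = 1 := by revert a; decide

lemma chi_zero : chi 0 = 1 := by norm_num [chi, ZMod.val_zero]

lemma chi_one : chi 1 = -1 := by norm_num [chi, ZMod.val_one]

lemma chi_add (a b : ZMod 2) : chi (a + b) = chi a * chi b := by
  rcases zmod2_cases a with ha | ha <;> rcases zmod2_cases b with hb | hb <;>
    subst ha <;> subst hb <;>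
    simp [chi_zero, chi_one, show ((1 : ZMod 2) + 1) = 0 from rfl]

lemma chi_pm (a : ZMod 2) : chi a = 1 ∨ chi a = -1 := by
  rcases zmod2_cases a with ha | ha <;> subst ha <;> simp [chi_zero, chi_one]

lemma sum_zmod2 (h : ZMod 2 → ℂ) : ∑ y : ZMod 2, h y = h 0 + h 1 := by
  rw [show (univ : Finset (ZMod 2)) = {0, 1} from by decide]
  simp

lemma wht_int {n : ℕ} (g : (Fin n → ZMod 2) → ZMod 2) (u : Fin n → ZMod 2) :
    ∃ r : ℤ, WHT g u = (r : ℂ) := by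
  refine ⟨∑ x : Fin n → ZMod 2, (-1 : ℤ) ^ ((g x + ip u x).val), ?_⟩
  rw [WHT]; push_cast; rfl

lemma sign_of_abs {n : ℕ} (g : (Fin n → ZMod 2) → ZMod 2) (u : Fin n → ZMod 2) (m : ℕ)
    (h : ‖WHT g u‖ = 2 ^ m) :
    WHT g u = (2 : ℂ) ^ m ∨ WHT g u = -(2 : ℂ) ^ m := by
  obtain ⟨r, hr⟩ := wht_int g u
  rw [hr] at h ⊢
  rw [Complex.norm_intCast] at h
  have : r = 2 ^ m ∨ r = -(2 ^ m) := by
    rcases abs_cases (r : ℝ) with ⟨h1, _⟩ | ⟨h1, _⟩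
    · left; exact_mod_cast h1.symm.trans h
    · right
      have h2 : (r : ℝ) = -(2 ^ m) := by rw [← h, h1]; ring
      exact_mod_cast h2
  rcases this with h' | h' <;> [left; right] <;> rw [h'] <;> push_cast <;> ring

lemma wht3_decomp {n : ℕ} (a1 a2 a3 : (Fin n → ZMod 2) → ZMod 2)
    (u : Fin n → ZMod 2) (v1 v2 : ZMod 2) :
    WHT3 (fun z => z.2.1 * a1 z.1 + z.2.2 * a2 z.1 + a3 z.1) u v1 v2 =
      WHT a3 u + chi v1 * WHT (fun x => a1 x + a3 x) u
        + chi v2 * WHT (fun x => a2 x + a3 x) u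
        + chi v1 * chi v2 * WHT (fun x => a1 x + a2 x + a3 x) u := by
  have hc : ∀ a : ZMod 2, (-1 : ℂ) ^ a.val = chi a := fun _ => rfl
  rw [WHT3, WHT, WHT, WHT, WHT, Fintype.sum_prod_type]
  simp only [hc, Finset.mul_sum]
  rw [← Finset.sum_add_distrib, ← Finset.sum_add_distrib, ← Finset.sum_add_distrib]
  refine Finset.sum_congr rfl fun x _ => ?_
  rw [Fintype.sum_prod_type, sum_zmod2, sum_zmod2, sum_zmod2]
  simp only [zero_mul, one_mul, mul_zero, mul_one, add_zero, zero_add, chi_add]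
  ring

theorem gray_image_semibent_z8 (n : ℕ) (hn : Odd n)
    (a1 a2 a3 : (Fin n → ZMod 2) → ZMod 2) (f : (Fin n → ZMod 2) → ZMod 8)
    (hf : ∀ x, f x = ((a1 x).val : ZMod 8) + 2 * ((a2 x).val : ZMod 8)
        + 4 * ((a3 x).val : ZMod 8))
    (hgb : ∀ u, ‖GWT 8 f u‖ = Real.sqrt (2 ^ n))
    (hcases : ∀ u,
      (WHT a3 u = 0 ∧ WHT (fun x => a1 x + a3 x) u = 0 ∧
        ‖WHT (fun x => a2 x + a3 x) u‖ = 2 ^ ((n + 1) / 2) ∧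
        ‖WHT (fun x => a1 x + a2 x + a3 x) u‖ = 2 ^ ((n + 1) / 2)) ∨
      (‖WHT a3 u‖ = 2 ^ ((n + 1) / 2) ∧
        ‖WHT (fun x => a1 x + a3 x) u‖ = 2 ^ ((n + 1) / 2) ∧
        WHT (fun x => a2 x + a3 x) u = 0 ∧
        WHT (fun x => a1 x + a2 x + a3 x) u = 0)) :
    ∀ (u : Fin n → ZMod 2) (v1 v2 : ZMod 2),
      WHT3 (fun z => z.2.1 * a1 z.1 + z.2.2 * a2 z.1 + a3 z.1) u v1 v2 = 0 ∨
      WHT3 (fun z => z.2.1 * a1 z.1 + z.2.2 * a2 z.1 + a3 z.1) u v1 v2 = 2 ^ ((n + 3) / 2) ∨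
      WHT3 (fun z => z.2.1 * a1 z.1 + z.2.2 * a2 z.1 + a3 z.1) u v1 v2 = -2 ^ ((n + 3) / 2) := by
  intro u v1 v2
  have hm : (n + 3) / 2 = (n + 1) / 2 + 1 := by obtain ⟨k, hk⟩ := hn; omega
  rw [wht3_decomp, hm]
  rcases hcases u with ⟨h1, h2, h3, h4⟩ | ⟨h1, h2, h3, h4⟩
  · rcases sign_of_abs _ _ _ h3 with e3 | e3 <;> rcases sign_of_abs _ _ _ h4 with e4 | e4 <;>
      rcases chi_pm v1 with c1 | c1 <;> rcases chi_pm v2 with c2 | c2 <;>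
      rw [h1, h2, e3, e4, c1, c2] <;>
      first
        | (left; ring1)
        | (right; left; ring1)
        | (right; right; ring1)
  · rcases sign_of_abs _ _ _ h1 with e1 | e1 <;> rcases sign_of_abs _ _ _ h2 with e2 | e2 <;>
      rcases chi_pm v1 with c1 | c1 <;> rcases chi_pm v2 with c2 | c2 <;>
      rw [h3, h4, e1, e2, c1, c2] <;>
      first
        | (left; ring1)
        | (right; left; ring1)
        | (right; right; ring1)
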